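/- Let T > 0, r ≥ 1 and β ∈ (0,1/2). Then there exists a constant C > 0, depending only on β, r and T, such that for every integer N ≥ 2 and every n ∈ {2,…,N}, ∫_{t₁}^{t_n} (t_n − s)^{−2β} · ( ∫_0^{t₁} |(s − u)^{−β} − (ŝ − u)^{−β}|² du ) ds ≤ C·N^{−2(1−2β)}, where ŝ is the left graded-mesh point of s. -/

import Mathlib

open MeasureTheory intervalIntegral Set

/-- The graded mesh point `t_n = T * (n/N)^r`. -/
noncomputable def gmesh (T r : ℝ) (N n : ℕ) : ℝ := T * ((n : ℝ) / (N : ℝ)) ^ r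

namespace Stmt15Aux

lemma meas_left (b e : ℝ) : Measurable fun s : ℝ => (b - s) ^ e :=
  (measurable_const.sub measurable_id).pow measurable_const

lemma meas_right (a e : ℝ) : Measurable fun s : ℝ => (s - a) ^ e :=
  (measurable_id.sub measurable_const).pow measurable_const

lemma integ_left (a b e : ℝ) (he : -1 < e) :
    IntervalIntegrable (fun s => (b - s) ^ e) volume a b := by
  have h := (intervalIntegrable_rpow' (a := b - a) (b := 0) he).comp_sub_left b
  simpa using h

lemma integ_right (a b e : ℝ) (he : -1 < e) :
    IntervalIntegrable (fun s => (s - a) ^ e) volume a b := by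
  have h := (intervalIntegrable_rpow' (a := 0) (b := b - a) he).comp_sub_right a
  simpa using h

lemma val_left (a b e : ℝ) (he : -1 < e) :
    ∫ s in a..b, (b - s) ^ e = (b - a) ^ (e + 1) / (e + 1) := by
  rw [intervalIntegral.integral_comp_sub_left (fun x : ℝ => x ^ e) b, sub_self,
    integral_rpow (Or.inl he), Real.zero_rpow (by linarith : e + 1 ≠ 0)]
  ring

lemma val_right (a b e : ℝ) (he : -1 < e) :
    ∫ s in a..b, (s - a) ^ e = (b - a) ^ (e + 1) / (e + 1) := by
  rw [intervalIntegral.integral_comp_sub_right (fun x : ℝ => x ^ e) a, sub_self,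
    integral_rpow (Or.inl he), Real.zero_rpow (by linarith : e + 1 ≠ 0)]
  ring

lemma rpow_neg_diff_le {x y d : ℝ} (hx : 0 < x) (hxy : x ≤ y) (hd0 : 0 ≤ d) (hd1 : d ≤ 1) :
    x ^ (-d) - y ^ (-d) ≤ d * (y - x) * x ^ (-d - 1) := by
  have hy : 0 < y := hx.trans_le hxy
  set s : ℝ := (y - x) / x with hs_def
  have hs : 0 ≤ s := div_nonneg (by linarith) hx.le
  have hys : y = x * (1 + s) := by
    rw [hs_def, mul_add, mul_div_assoc', mul_comm x (y - x), mul_div_assoc, div_self hx.ne']; ring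
  have h1 : (1 + s) ^ d ≤ 1 + d * s :=
    rpow_one_add_le_one_add_mul_self (by linarith) hd0 hd1
  have h3 : 1 - d * s ≤ (1 + s) ^ (-d) := by
    rw [Real.rpow_neg (by linarith : (0:ℝ) ≤ 1 + s)]
    rcases le_or_gt (1 - d * s) 0 with h | h
    · exact h.trans (inv_nonneg.mpr (Real.rpow_nonneg (by linarith) _))
    · have hps : 0 < (1 + s) ^ d := Real.rpow_pos_of_pos (by linarith) _
      rw [← one_div, le_div_iff₀ hps]
      nlinarith [mul_nonneg (mul_nonneg hd0 hs) (mul_nonneg hd0 hs)]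
  have hxd : 0 < x ^ (-d) := Real.rpow_pos_of_pos hx _
  have hyd : y ^ (-d) = x ^ (-d) * (1 + s) ^ (-d) := by
    rw [hys, Real.mul_rpow hx.le (by linarith)]
  have hstep : x ^ (-d) - y ^ (-d) ≤ x ^ (-d) * (d * s) := by
    rw [hyd]; nlinarith
  have hxe : x ^ (-d - 1) = x ^ (-d) * x⁻¹ := by
    rw [show -d - 1 = -d + (-1) by ring, Real.rpow_add hx, Real.rpow_neg_one]
  calc x ^ (-d) - y ^ (-d) ≤ x ^ (-d) * (d * s) := hstep
    _ = d * (y - x) * (x ^ (-d) * x⁻¹) := by rw [hs_def]; field_simp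
    _ = d * (y - x) * x ^ (-d - 1) := by rw [hxe]

lemma sq_diff_le {b x y : ℝ} (hb : 0 ≤ b) (hx : 0 < x) (hxy : x ≤ y) :
    (x ^ (-b) - y ^ (-b)) ^ 2 ≤ x ^ (-(2 * b)) - y ^ (-(2 * b)) := by
  have hy : 0 < y := hx.trans_le hxy
  have hq : 0 < y ^ (-b) := Real.rpow_pos_of_pos hy _
  have hpq : y ^ (-b) ≤ x ^ (-b) :=
    Real.rpow_le_rpow_of_nonpos hx hxy (neg_nonpos.mpr hb)
  have e1 : x ^ (-(2 * b)) = (x ^ (-b)) ^ 2 := by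
    rw [show -(2 * b) = (-b) * ((2:ℕ):ℝ) by push_cast; ring, Real.rpow_mul hx.le,
      Real.rpow_natCast]
  have e2 : y ^ (-(2 * b)) = (y ^ (-b)) ^ 2 := by
    rw [show -(2 * b) = (-b) * ((2:ℕ):ℝ) by push_cast; ring, Real.rpow_mul hy.le,
      Real.rpow_natCast]
  rw [e1, e2]
  nlinarith

lemma le_rpow_interp {J X Y l : ℝ} (hJ : 0 ≤ J) (hX : J ≤ X) (hY : J ≤ Y)
    (hl0 : 0 ≤ l) (hl1 : l ≤ 1) : J ≤ X ^ (1 - l) * Y ^ l := by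
  have hJeq : J = J ^ (1 - l) * J ^ l := by
    rw [← Real.rpow_add' hJ (by norm_num : (1 - l) + l ≠ 0)]
    norm_num
  rw [hJeq]
  exact mul_le_mul (Real.rpow_le_rpow hJ hX (by linarith))
    (Real.rpow_le_rpow hJ hY hl0) (Real.rpow_nonneg hJ _) (Real.rpow_nonneg (hJ.trans hX) _)

/-- Integrability of the beta-type integrand. -/
lemma beta_integrable {a b p : ℝ} (hab : a < b) (hp0 : 0 < p) (hp1 : p < 1) :
    IntervalIntegrable (fun s => (b - s) ^ (-p) * (s - a) ^ (p - 1)) volume a b := by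
  set m := (a + b) / 2 with hm
  have ham : a < m := by rw [hm]; linarith
  have hmb : m < b := by rw [hm]; linarith
  have hmeas : Measurable fun s : ℝ => (b - s) ^ (-p) * (s - a) ^ (p - 1) :=
    (meas_left b (-p)).mul (meas_right a (p - 1))
  have hleft : IntervalIntegrable (fun s => (b - s) ^ (-p) * (s - a) ^ (p - 1)) volume a m := by
    apply IntervalIntegrable.mono_fun'
      ((integ_right a m (p - 1) (by linarith)).const_mul ((b - m) ^ (-p)))
      hmeas.aestronglyMeasurable.restrict
    · refine (ae_restrict_iff' measurableSet_uIoc).mpr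
        (Filter.Eventually.of_forall fun s hs => ?_)
      rw [uIoc_of_le ham.le] at hs
      have h1 : 0 ≤ (b - s) ^ (-p) * (s - a) ^ (p - 1) :=
        mul_nonneg (Real.rpow_nonneg (by linarith [hs.2, hmb]) _)
          (Real.rpow_nonneg (by linarith [hs.1]) _)
      dsimp only
      rw [Real.norm_eq_abs, abs_of_nonneg h1]
      have h2 : (b - s) ^ (-p) ≤ (b - m) ^ (-p) :=
        Real.rpow_le_rpow_of_nonpos (by linarith [hs.2, hmb]) (by linarith [hs.2])
          (by linarith)
      exact mul_le_mul_of_nonneg_right h2 (Real.rpow_nonneg (by linarith [hs.1]) _)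
  have hright : IntervalIntegrable (fun s => (b - s) ^ (-p) * (s - a) ^ (p - 1)) volume m b := by
    apply IntervalIntegrable.mono_fun'
      ((integ_left m b (-p) (by linarith)).const_mul ((m - a) ^ (p - 1)))
      hmeas.aestronglyMeasurable.restrict
    · refine (ae_restrict_iff' measurableSet_uIoc).mpr
        (Filter.Eventually.of_forall fun s hs => ?_)
      rw [uIoc_of_le hmb.le] at hs
      have h1 : 0 ≤ (b - s) ^ (-p) * (s - a) ^ (p - 1) :=
        mul_nonneg (Real.rpow_nonneg (by linarith [hs.2]) _)
          (Real.rpow_nonneg (by linarith [hs.1, ham]) _)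
      dsimp only
      rw [Real.norm_eq_abs, abs_of_nonneg h1]
      have h2 : (s - a) ^ (p - 1) ≤ (m - a) ^ (p - 1) :=
        Real.rpow_le_rpow_of_nonpos (by linarith [ham]) (by linarith [hs.1]) (by linarith)
      calc (b - s) ^ (-p) * (s - a) ^ (p - 1)
          ≤ (b - s) ^ (-p) * (m - a) ^ (p - 1) :=
            mul_le_mul_of_nonneg_left h2 (Real.rpow_nonneg (by linarith [hs.2]) _)
        _ = (m - a) ^ (p - 1) * (b - s) ^ (-p) := by ring
  exact hleft.trans hright

/-- Bound for the beta-type integral with exponents summing to one. -/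
lemma beta_bound {a b p : ℝ} (hab : a < b) (hp0 : 0 < p) (hp1 : p < 1) :
    (∫ s in a..b, (b - s) ^ (-p) * (s - a) ^ (p - 1)) ≤ 1 / p + 1 / (1 - p) := by
  set m := (a + b) / 2 with hm
  have ham : a < m := by rw [hm]; linarith
  have hmb : m < b := by rw [hm]; linarith
  have hd : 0 < m - a := by linarith
  have hbm : b - m = m - a := by rw [hm]; ring
  have hI := beta_integrable hab hp0 hp1
  have hl : IntervalIntegrable (fun s => (b - s) ^ (-p) * (s - a) ^ (p - 1)) volume a m :=
    hI.mono_set (by rw [uIcc_of_le ham.le, uIcc_of_le hab.le]; exact Icc_subset_Icc le_rfl hmb.le)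
  have hr : IntervalIntegrable (fun s => (b - s) ^ (-p) * (s - a) ^ (p - 1)) volume m b :=
    hI.mono_set (by rw [uIcc_of_le hmb.le, uIcc_of_le hab.le]; exact Icc_subset_Icc ham.le le_rfl)
  rw [← integral_add_adjacent_intervals hl hr]
  have hboundL : (∫ s in a..m, (b - s) ^ (-p) * (s - a) ^ (p - 1)) ≤ 1 / p := by
    have hmono := intervalIntegral.integral_mono_on ham.le hl
      ((integ_right a m (p - 1) (by linarith)).const_mul ((b - m) ^ (-p)))
      (fun s hs => ?_)
    · calc (∫ s in a..m, (b - s) ^ (-p) * (s - a) ^ (p - 1))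
          ≤ ∫ s in a..m, (b - m) ^ (-p) * (s - a) ^ (p - 1) := hmono
        _ = (b - m) ^ (-p) * ∫ s in a..m, (s - a) ^ (p - 1) := by
            rw [intervalIntegral.integral_const_mul]
        _ = (b - m) ^ (-p) * ((m - a) ^ (p - 1 + 1) / (p - 1 + 1)) := by
            rw [val_right a m (p - 1) (by linarith)]
        _ = 1 / p := by
            rw [hbm, ← mul_div_assoc, ← Real.rpow_add hd,
              show -p + (p - 1 + 1) = 0 by ring, Real.rpow_zero, show p - 1 + 1 = p by ring]
    · have h2 : (b - s) ^ (-p) ≤ (b - m) ^ (-p) :=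
        Real.rpow_le_rpow_of_nonpos (by linarith [hs.2]) (by linarith [hs.2]) (by linarith)
      exact mul_le_mul_of_nonneg_right h2 (Real.rpow_nonneg (by linarith [hs.1]) _)
  have hboundR : (∫ s in m..b, (b - s) ^ (-p) * (s - a) ^ (p - 1)) ≤ 1 / (1 - p) := by
    have hmono := intervalIntegral.integral_mono_on hmb.le hr
      ((integ_left m b (-p) (by linarith)).const_mul ((m - a) ^ (p - 1)))
      (fun s hs => ?_)
    · calc (∫ s in m..b, (b - s) ^ (-p) * (s - a) ^ (p - 1))
          ≤ ∫ s in m..b, (m - a) ^ (p - 1) * (b - s) ^ (-p) := hmono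
        _ = (m - a) ^ (p - 1) * ∫ s in m..b, (b - s) ^ (-p) := by
            rw [intervalIntegral.integral_const_mul]
        _ = (m - a) ^ (p - 1) * ((b - m) ^ (-p + 1) / (-p + 1)) := by
            rw [val_left m b (-p) (by linarith)]
        _ = 1 / (1 - p) := by
            rw [hbm, ← mul_div_assoc, ← Real.rpow_add hd,
              show p - 1 + (-p + 1) = 0 by ring, Real.rpow_zero]
            rw [show -p + 1 = 1 - p by ring]
    · have h2 : (s - a) ^ (p - 1) ≤ (m - a) ^ (p - 1) :=
        Real.rpow_le_rpow_of_nonpos (by linarith) (by linarith [hs.1]) (by linarith)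
      calc (b - s) ^ (-p) * (s - a) ^ (p - 1)
          ≤ (b - s) ^ (-p) * (m - a) ^ (p - 1) :=
            mul_le_mul_of_nonneg_left h2 (Real.rpow_nonneg (by linarith [hs.2]) _)
        _ = (m - a) ^ (p - 1) * (b - s) ^ (-p) := by ring
  linarith

/-- Crude bound for the inner integral. -/
lemma innerA {b c a s : ℝ} (hb0 : 0 < b) (hb1 : b < 1/2) (hc : 0 < c) (hca : c ≤ a)
    (has : a ≤ s) :
    (∫ u in (0:ℝ)..c, |(s - u) ^ (-b) - (a - u) ^ (-b)| ^ 2)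
      ≤ c ^ (1 - 2 * b) / (1 - 2 * b) := by
  have hrhs : 0 ≤ c ^ (1 - 2 * b) / (1 - 2 * b) :=
    div_nonneg (Real.rpow_nonneg hc.le _) (by linarith)
  by_cases hI : IntervalIntegrable
      (fun u => |(s - u) ^ (-b) - (a - u) ^ (-b)| ^ 2) volume 0 c
  · have hg : IntervalIntegrable (fun u => (c - u) ^ (-(2 * b))) volume 0 c :=
      integ_left 0 c _ (by linarith)
    have hae : (fun u => |(s - u) ^ (-b) - (a - u) ^ (-b)| ^ 2)
        ≤ᵐ[volume.restrict (Icc 0 c)] fun u => (c - u) ^ (-(2 * b)) := by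
      refine (ae_restrict_iff' measurableSet_Icc).mpr ?_
      have hne : ∀ᵐ (u : ℝ) ∂volume, u ≠ c := by
        rw [MeasureTheory.ae_iff]
        simp only [not_not, Set.setOf_eq_eq_singleton]
        exact Real.volume_singleton
      filter_upwards [hne] with u hu humem
      have huc : u < c := lt_of_le_of_ne humem.2 hu
      have hx : 0 < a - u := by linarith
      have hxy : a - u ≤ s - u := by linarith
      have hyn : (0:ℝ) ≤ (s - u) ^ (-b) := Real.rpow_nonneg (by linarith) _
      have hpq : (s - u) ^ (-b) ≤ (a - u) ^ (-b) :=
        Real.rpow_le_rpow_of_nonpos hx hxy (by linarith)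
      have habs : |(s - u) ^ (-b) - (a - u) ^ (-b)| = (a - u) ^ (-b) - (s - u) ^ (-b) := by
        rw [abs_sub_comm]; exact abs_of_nonneg (by linarith)
      rw [habs]
      calc ((a - u) ^ (-b) - (s - u) ^ (-b)) ^ 2
          ≤ (a - u) ^ (-(2 * b)) - (s - u) ^ (-(2 * b)) := sq_diff_le hb0.le hx hxy
        _ ≤ (a - u) ^ (-(2 * b)) := by
            linarith [Real.rpow_nonneg (show (0:ℝ) ≤ s - u by linarith) (-(2 * b))]
        _ ≤ (c - u) ^ (-(2 * b)) :=
            Real.rpow_le_rpow_of_nonpos (by linarith) (by linarith) (by linarith)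
    have hmono := intervalIntegral.integral_mono_ae_restrict hc.le hI hg hae
    have hv := val_left 0 c (-(2 * b)) (by linarith)
    rw [sub_zero] at hv
    calc (∫ u in (0:ℝ)..c, |(s - u) ^ (-b) - (a - u) ^ (-b)| ^ 2)
        ≤ ∫ u in (0:ℝ)..c, (c - u) ^ (-(2 * b)) := hmono
      _ = c ^ (-(2 * b) + 1) / (-(2 * b) + 1) := hv
      _ = c ^ (1 - 2 * b) / (1 - 2 * b) := by rw [show -(2 * b) + 1 = 1 - 2 * b by ring]
  · rw [intervalIntegral.integral_undef hI]; exact hrhs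

/-- Refined bound for the inner integral when the left mesh point is separated from `c`. -/
lemma innerB {b c a s h : ℝ} (hb0 : 0 < b) (hb1 : b < 1/2) (hc : 0 < c) (hca : c < a)
    (has : a ≤ s) (hsh : s - a ≤ h) :
    (∫ u in (0:ℝ)..c, |(s - u) ^ (-b) - (a - u) ^ (-b)| ^ 2)
      ≤ c * (2 * b * h) * (a - c) ^ (-(2 * b) - 1) := by
  have hh0 : 0 ≤ h := le_trans (by linarith) hsh
  have hac : 0 < a - c := by linarith
  have hrhs : 0 ≤ c * (2 * b * h) * (a - c) ^ (-(2 * b) - 1) := by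
    apply mul_nonneg (mul_nonneg hc.le (by positivity)) (Real.rpow_nonneg hac.le _)
  by_cases hI : IntervalIntegrable
      (fun u => |(s - u) ^ (-b) - (a - u) ^ (-b)| ^ 2) volume 0 c
  · have hmono := intervalIntegral.integral_mono_on hc.le hI
      (_root_.intervalIntegrable_const (c := 2 * b * h * (a - c) ^ (-(2 * b) - 1)))
      (fun u hu => ?_)
    · calc (∫ u in (0:ℝ)..c, |(s - u) ^ (-b) - (a - u) ^ (-b)| ^ 2)
          ≤ ∫ _u in (0:ℝ)..c, 2 * b * h * (a - c) ^ (-(2 * b) - 1) := hmono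
        _ = c * (2 * b * h) * (a - c) ^ (-(2 * b) - 1) := by
            rw [intervalIntegral.integral_const, smul_eq_mul]; ring
    · have hx : 0 < a - u := by linarith [hu.2]
      have hxy : a - u ≤ s - u := by linarith
      have hpq : (s - u) ^ (-b) ≤ (a - u) ^ (-b) :=
        Real.rpow_le_rpow_of_nonpos hx hxy (by linarith)
      have habs : |(s - u) ^ (-b) - (a - u) ^ (-b)| = (a - u) ^ (-b) - (s - u) ^ (-b) := by
        rw [abs_sub_comm]; exact abs_of_nonneg (by linarith)
      rw [habs]
      have h1 : ((a - u) ^ (-b) - (s - u) ^ (-b)) ^ 2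
          ≤ (a - u) ^ (-(2 * b)) - (s - u) ^ (-(2 * b)) := sq_diff_le hb0.le hx hxy
      have h2 : (a - u) ^ (-(2 * b)) - (s - u) ^ (-(2 * b))
          ≤ 2 * b * ((s - u) - (a - u)) * (a - u) ^ (-(2 * b) - 1) :=
        rpow_neg_diff_le hx hxy (by linarith) (by linarith)
      have h3 : (a - u) ^ (-(2 * b) - 1) ≤ (a - c) ^ (-(2 * b) - 1) :=
        Real.rpow_le_rpow_of_nonpos hac (by linarith [hu.2]) (by linarith)
      have h4 : 2 * b * ((s - u) - (a - u)) * (a - u) ^ (-(2 * b) - 1)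
          ≤ 2 * b * h * (a - c) ^ (-(2 * b) - 1) := by
        have e1 : (s - u) - (a - u) = s - a := by ring
        rw [e1]
        apply mul_le_mul (by nlinarith) h3 (Real.rpow_nonneg hx.le _) (by positivity)
      linarith
  · rw [intervalIntegral.integral_undef hI]; exact hrhs

lemma gmesh_mono {T r : ℝ} (hT : 0 < T) (hr : 1 ≤ r) {N : ℕ} (hN : 1 ≤ N) {i j : ℕ}
    (hij : i < j) : gmesh T r N i < gmesh T r N j := by
  have hN0 : (0:ℝ) < N := by exact_mod_cast Nat.lt_of_lt_of_le Nat.zero_lt_one hN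
  unfold gmesh
  apply mul_lt_mul_of_pos_left _ hT
  apply Real.rpow_lt_rpow (by positivity) _ (by linarith)
  have hij' : (i:ℝ) < (j:ℝ) := by exact_mod_cast hij
  exact (div_lt_div_iff_of_pos_right hN0).mpr hij'

lemma gmesh_pos {T r : ℝ} (hT : 0 < T) {N j : ℕ} (hN : 1 ≤ N) (hj : 1 ≤ j) :
    0 < gmesh T r N j := by
  have hN0 : (0:ℝ) < N := by exact_mod_cast Nat.lt_of_lt_of_le Nat.zero_lt_one hN
  have hj0 : (0:ℝ) < j := by exact_mod_cast hj
  unfold gmesh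
  have : 0 < ((j:ℝ)/(N:ℝ)) ^ r := Real.rpow_pos_of_pos (by positivity) r
  positivity

lemma gmesh_dec (T r : ℝ) (N j : ℕ) : gmesh T r N j = T * ((j:ℝ)^r / (N:ℝ)^r) := by
  unfold gmesh; rw [Real.div_rpow (Nat.cast_nonneg j) (Nat.cast_nonneg N)]

lemma gmesh_le {T r : ℝ} (hT : 0 < T) (hr : 1 ≤ r) {N : ℕ} (hN : 1 ≤ N) (j : ℕ) :
    gmesh T r N j ≤ (j:ℝ)^r * T / N := by
  have hN0 : (0:ℝ) < N := by exact_mod_cast Nat.lt_of_lt_of_le Nat.zero_lt_one hN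
  have hN1 : (1:ℝ) ≤ N := by exact_mod_cast hN
  rw [gmesh_dec]
  have hNr : (N:ℝ) ≤ (N:ℝ)^r := by
    have h := Real.rpow_le_rpow_of_exponent_le hN1 hr
    rwa [Real.rpow_one] at h
  have h2 : (j:ℝ)^r / (N:ℝ)^r ≤ (j:ℝ)^r / (N:ℝ) :=
    div_le_div_of_nonneg_left (Real.rpow_nonneg (Nat.cast_nonneg j) r) hN0 hNr
  calc T * ((j:ℝ)^r / (N:ℝ)^r) ≤ T * ((j:ℝ)^r / (N:ℝ)) :=
        mul_le_mul_of_nonneg_left h2 hT.le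
    _ = (j:ℝ)^r * T / N := by ring

lemma gmesh_step {T r : ℝ} (hT : 0 < T) (hr : 1 ≤ r) {N i : ℕ} (hiN : i + 1 ≤ N) :
    gmesh T r N (i+1) - gmesh T r N i ≤ r * T / N := by
  have hN0 : (0:ℝ) < N := by
    have : 0 < N := by omega
    exact_mod_cast this
  have hi1 : (0:ℝ) < (i:ℝ) + 1 := by positivity
  have hiN' : ((i:ℝ) + 1) ≤ N := by exact_mod_cast hiN
  unfold gmesh
  push_cast
  have e1 : (i:ℝ)/N = (((i:ℝ)+1)/N) * ((i:ℝ)/((i:ℝ)+1)) := by field_simp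
  have e2 : ((i:ℝ)/(N:ℝ))^r = (((i:ℝ)+1)/N)^r * ((i:ℝ)/((i:ℝ)+1))^r := by
    rw [e1, Real.mul_rpow (by positivity) (by positivity)]
  have hbern : 1 - r * (1/((i:ℝ)+1)) ≤ ((i:ℝ)/((i:ℝ)+1))^r := by
    have hsle : (-1:ℝ) ≤ -(1/((i:ℝ)+1)) := by
      rw [neg_le_neg_iff, div_le_one hi1]
      linarith [Nat.cast_nonneg (α := ℝ) i]
    have h := one_add_mul_self_le_rpow_one_add hsle hr
    have e3 : 1 + -(1/((i:ℝ)+1)) = (i:ℝ)/((i:ℝ)+1) := by field_simp; ring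
    rw [e3] at h
    linarith
  have hx1 : ((i:ℝ)+1)/N ≤ 1 := by rw [div_le_one hN0]; linarith
  have hx0 : (0:ℝ) < ((i:ℝ)+1)/N := by positivity
  have hxr : (((i:ℝ)+1)/N)^r ≤ ((i:ℝ)+1)/N := by
    have h := Real.rpow_le_rpow_of_exponent_ge hx0 hx1 hr
    rwa [Real.rpow_one] at h
  calc T * (((i:ℝ)+1)/N)^r - T * ((i:ℝ)/N)^r
      = T * (((i:ℝ)+1)/N)^r * (1 - ((i:ℝ)/((i:ℝ)+1))^r) := by rw [e2]; ring
    _ ≤ T * (((i:ℝ)+1)/N)^r * (r * (1/((i:ℝ)+1))) := by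
        apply mul_le_mul_of_nonneg_left (by linarith) (by positivity)
    _ ≤ T * (((i:ℝ)+1)/N) * (r * (1/((i:ℝ)+1))) := by
        apply mul_le_mul_of_nonneg_right (mul_le_mul_of_nonneg_left hxr hT.le) (by positivity)
    _ = r * T / N := by field_simp

lemma gmesh_K {T r : ℝ} (hT : 0 < T) (hr : 1 ≤ r) {N i : ℕ} (hN : 1 ≤ N) (hi : 2 ≤ i) :
    gmesh T r N (i+1) - gmesh T r N 1
      ≤ (2*(3/2:ℝ)^r) * (gmesh T r N i - gmesh T r N 1) := by
  have hN0 : (0:ℝ) < N := by exact_mod_cast Nat.lt_of_lt_of_le Nat.zero_lt_one hN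
  have h32 : (1:ℝ) ≤ (3/2:ℝ)^r := by
    have h := Real.rpow_le_rpow_of_exponent_le (by norm_num : (1:ℝ) ≤ 3/2)
      (by linarith : (0:ℝ) ≤ r)
    rwa [Real.rpow_zero] at h
  have hi2 : (2:ℝ) ≤ (i:ℝ) := by exact_mod_cast hi
  have hir : (2:ℝ) ≤ (i:ℝ)^r := by
    have h1 : (2:ℝ) ≤ (2:ℝ)^r := by
      have h := Real.rpow_le_rpow_of_exponent_le (by norm_num : (1:ℝ) ≤ 2) hr
      rwa [Real.rpow_one] at h
    have h2 : (2:ℝ)^r ≤ (i:ℝ)^r := Real.rpow_le_rpow (by norm_num) hi2 (by linarith)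
    linarith
  have h3 : ((i:ℝ)+1)^r ≤ (3/2:ℝ)^r * (i:ℝ)^r := by
    have h4 : ((i:ℝ)+1) ≤ (3/2) * (i:ℝ) := by linarith
    have h5 : ((i:ℝ)+1)^r ≤ ((3/2)*(i:ℝ))^r :=
      Real.rpow_le_rpow (by positivity) h4 (by linarith)
    rwa [Real.mul_rpow (by norm_num) (by positivity)] at h5
  have key : ((i:ℝ)+1)^r - 1 ≤ (2*(3/2:ℝ)^r) * ((i:ℝ)^r - 1) := by nlinarith
  rw [gmesh_dec, gmesh_dec, gmesh_dec]
  have e : ∀ z : ℝ, T * (z/(N:ℝ)^r) = (T/(N:ℝ)^r) * z := fun z => by ring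
  rw [e, e, e]
  push_cast
  rw [Real.one_rpow]
  have hTN : (0:ℝ) < T / (N:ℝ)^r := by
    have : (0:ℝ) < (N:ℝ)^r := Real.rpow_pos_of_pos hN0 r
    positivity
  nlinarith [mul_le_mul_of_nonneg_left key hTN.le]

end Stmt15Aux

set_option maxHeartbeats 2000000 in
open Stmt15Aux in
/-- Double-integral kernel bound (equation `eq.diffSqureDoub1`). -/
theorem stmt15 (T r β : ℝ) (hT : 0 < T) (hr : 1 ≤ r)
    (hβ : β ∈ Set.Ioo (0:ℝ) (1/2)) :
    ∃ C > (0:ℝ), ∀ N : ℕ, 2 ≤ N → ∀ hat : ℝ → ℝ,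
      (∀ i : ℕ, i < N →
        ∀ s ∈ Set.Ico (gmesh T r N i) (gmesh T r N (i + 1)), hat s = gmesh T r N i) →
      ∀ n : ℕ, 2 ≤ n → n ≤ N →
        (∫ s in (gmesh T r N 1)..(gmesh T r N n),
            (gmesh T r N n - s) ^ (-(2 * β)) *
              ∫ u in (0:ℝ)..(gmesh T r N 1),
                |(s - u) ^ (-β) - (hat s - u) ^ (-β)| ^ 2)
          ≤ C * (N : ℝ) ^ (-(2 * (1 - 2 * β))) := by
  classical
  obtain ⟨hβ0, hβ1⟩ := hβ
  have hβ1' : 2 * β < 1 := by linarith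
  set l : ℝ := (1 - 2*β)/(1 + 2*β) with hldef
  have hl0 : 0 < l := div_pos (by linarith) (by linarith)
  have hl1 : l < 1 := by rw [hldef, div_lt_one (by linarith)]; linarith
  set K : ℝ := 2 * (3/2:ℝ)^r with hKdef
  have h32 : (1:ℝ) ≤ (3/2:ℝ)^r := by
    have h := Real.rpow_le_rpow_of_exponent_le (by norm_num : (1:ℝ) ≤ 3/2)
      (by linarith : (0:ℝ) ≤ r)
    rwa [Real.rpow_zero] at h
  have hK1 : 1 ≤ K := by rw [hKdef]; linarith
  set CA : ℝ := T^(1-2*β) / (1-2*β) with hCAdef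
  have hCA : 0 < CA := div_pos (Real.rpow_pos_of_pos hT _) (by linarith)
  have h2r : (0:ℝ) < (2:ℝ)^r := Real.rpow_pos_of_pos (by norm_num) r
  set C1 : ℝ := CA * ((2:ℝ)^r * T)^(1-2*β) with hC1def
  set C2 : ℝ := K * CA^(1-l) * (2*β*r*T^2)^l with hC2def
  have hC1 : 0 < C1 := mul_pos hCA (Real.rpow_pos_of_pos (by positivity) _)
  have hC2 : 0 < C2 :=
    mul_pos (mul_pos (by linarith) (Real.rpow_pos_of_pos hCA _))
      (Real.rpow_pos_of_pos (by positivity) _)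
  have hCpos : 0 < (1/(2*β) + 1/(1-2*β)) * (C1 + C2) := by
    have h1 : (0:ℝ) < 1/(2*β) := by positivity
    have h2 : (0:ℝ) < 1/(1-2*β) := one_div_pos.mpr (by linarith)
    have h3 : (0:ℝ) < C1 + C2 := by linarith
    positivity
  refine ⟨(1/(2*β) + 1/(1-2*β)) * (C1 + C2), hCpos, ?_⟩
  intro N hN hat hhat n hn2 hnN
  have hN1 : 1 ≤ N := by omega
  have hN0 : (0:ℝ) < N := by exact_mod_cast (by omega : 0 < N)
  have ht1pos : 0 < gmesh T r N 1 := gmesh_pos hT hN1 le_rfl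
  have ht12 : gmesh T r N 1 < gmesh T r N 2 := gmesh_mono hT hr hN1 (by omega)
  have ht1n : gmesh T r N 1 < gmesh T r N n := gmesh_mono hT hr hN1 (by omega)
  have ht1le : gmesh T r N 1 ≤ T / N := by
    have h := gmesh_le hT hr hN1 1
    rwa [Nat.cast_one, Real.one_rpow, one_mul] at h
  have ht2le : gmesh T r N 2 ≤ (2:ℝ)^r * T / N := by
    have h := gmesh_le hT hr hN1 2
    rwa [Nat.cast_ofNat] at h
  set A : ℝ := (gmesh T r N 1)^(1-2*β) / (1-2*β) with hAdef
  have hA0 : 0 < A := div_pos (Real.rpow_pos_of_pos ht1pos _) (by linarith)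
  set B0 : ℝ := gmesh T r N 1 * (2*β*(r*T/(N:ℝ))) with hB0def
  have hB00 : 0 < B0 := by
    apply mul_pos ht1pos
    have hr0 : 0 < r := by linarith
    positivity
  set M1 : ℝ := A * (gmesh T r N 2 - gmesh T r N 1)^(1-2*β) with hM1def
  set M2 : ℝ := K * A^(1-l) * B0^l with hM2def
  have hM10 : 0 < M1 := mul_pos hA0 (Real.rpow_pos_of_pos (by linarith) _)
  have hM20 : 0 < M2 :=
    mul_pos (mul_pos (by linarith) (Real.rpow_pos_of_pos hA0 _))
      (Real.rpow_pos_of_pos hB00 _)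
  set M : ℝ := M1 + M2 with hMdef
  have hM0 : 0 < M := by rw [hMdef]; linarith
  -- locating a point of the mesh
  have hfind : ∀ s, gmesh T r N 1 ≤ s → s < gmesh T r N n →
      ∃ i : ℕ, 1 ≤ i ∧ i < n ∧ gmesh T r N i ≤ s ∧ s < gmesh T r N (i+1) := by
    intro s hs1 hsn
    have hPex : ∃ j, s < gmesh T r N j := ⟨n, hsn⟩
    have hj : s < gmesh T r N (Nat.find hPex) := Nat.find_spec hPex
    have hj2 : 2 ≤ Nat.find hPex := by
      by_contra hcon
      push_neg at hcon
      have hle : gmesh T r N (Nat.find hPex) ≤ gmesh T r N 1 := by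
        rcases (by omega : Nat.find hPex = 0 ∨ Nat.find hPex = 1) with h0 | h1
        · rw [h0]; exact (gmesh_mono hT hr hN1 (by omega)).le
        · rw [h1]
      linarith
    have hmin := Nat.find_min hPex (show Nat.find hPex - 1 < Nat.find hPex by omega)
    push_neg at hmin
    refine ⟨Nat.find hPex - 1, by omega, ?_, hmin, ?_⟩
    · by_contra hcon
      push_neg at hcon
      have hle : gmesh T r N n ≤ gmesh T r N (Nat.find hPex - 1) := by
        rcases eq_or_lt_of_le hcon with he | hl
        · rw [he]
        · exact (gmesh_mono hT hr hN1 hl).le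
      linarith
    · have he : Nat.find hPex - 1 + 1 = Nat.find hPex := by omega
      rw [he]; exact hj
  -- the pointwise bound
  have hkey : ∀ s ∈ Icc (gmesh T r N 1) (gmesh T r N n),
      (gmesh T r N n - s) ^ (-(2 * β)) *
          (∫ u in (0:ℝ)..(gmesh T r N 1), |(s - u) ^ (-β) - (hat s - u) ^ (-β)| ^ 2)
        ≤ M * ((gmesh T r N n - s) ^ (-(2 * β)) * (s - gmesh T r N 1) ^ (2 * β - 1)) := by
    intro s hs
    obtain ⟨hs1, hsn⟩ := hs
    rcases eq_or_lt_of_le hs1 with heq | hs1lt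
    · -- s is the first mesh point
      subst heq
      have hhat1 : hat (gmesh T r N 1) = gmesh T r N 1 := by
        apply hhat 1 (by omega)
        exact ⟨le_rfl, by simpa using ht12⟩
      have hL : (∫ u in (0:ℝ)..gmesh T r N 1,
          |(gmesh T r N 1 - u) ^ (-β) - (hat (gmesh T r N 1) - u) ^ (-β)| ^ 2) = 0 := by
        rw [hhat1]; simp
      rw [hL, mul_zero, sub_self, Real.zero_rpow (by linarith : 2*β - 1 ≠ 0), mul_zero, mul_zero]
    rcases eq_or_lt_of_le hsn with heqn | hsnlt
    · -- s is the last mesh point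
      rw [heqn, sub_self, Real.zero_rpow (by linarith : -(2*β) ≠ 0), zero_mul, zero_mul,
        mul_zero]
    -- interior case
    obtain ⟨i, hi1, hin, htis, hsti⟩ := hfind s hs1lt.le hsnlt
    have hiN : i < N := by omega
    have hhats : hat s = gmesh T r N i := hhat i hiN s ⟨htis, hsti⟩
    rw [hhats]
    have ht1i : gmesh T r N 1 ≤ gmesh T r N i := by
      rcases eq_or_lt_of_le hi1 with he | hl
      · rw [← he]
      · exact (gmesh_mono hT hr hN1 hl).le
    have hJA := innerA hβ0 hβ1 ht1pos ht1i htis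
    have hJnn : 0 ≤ ∫ u in (0:ℝ)..gmesh T r N 1,
        |(s - u) ^ (-β) - (gmesh T r N i - u) ^ (-β)| ^ 2 :=
      intervalIntegral.integral_nonneg ht1pos.le (fun u _ => by positivity)
    have htnn : (0:ℝ) ≤ (gmesh T r N n - s) ^ (-(2*β)) :=
      Real.rpow_nonneg (by linarith) _
    have hst1 : 0 < s - gmesh T r N 1 := by linarith
    have hprodnn : 0 ≤ (gmesh T r N n - s) ^ (-(2*β)) * (s - gmesh T r N 1) ^ (2*β-1) :=
      mul_nonneg htnn (Real.rpow_nonneg hst1.le _)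
    rcases eq_or_lt_of_le hi1 with hieq | hige2
    · -- i = 1
      subst hieq
      have hs2 : s < gmesh T r N 2 := by simpa using hsti
      have hstep1 : gmesh T r N 1 ^ (1 - 2*β) / (1 - 2*β)
          ≤ M1 * (s - gmesh T r N 1)^(2*β-1) := by
        have h1 : (gmesh T r N 2 - gmesh T r N 1)^(2*β-1) ≤ (s - gmesh T r N 1)^(2*β-1) :=
          Real.rpow_le_rpow_of_nonpos hst1 (by linarith) (by linarith)
        have e : M1 * (gmesh T r N 2 - gmesh T r N 1)^(2*β-1)
            = gmesh T r N 1 ^ (1 - 2*β) / (1 - 2*β) := by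
          rw [hM1def, mul_assoc,
            ← Real.rpow_add (by linarith : (0:ℝ) < gmesh T r N 2 - gmesh T r N 1),
            show (1-2*β) + (2*β-1) = 0 by ring, Real.rpow_zero, mul_one, hAdef]
        calc gmesh T r N 1 ^ (1 - 2*β) / (1 - 2*β)
            = M1 * (gmesh T r N 2 - gmesh T r N 1)^(2*β-1) := e.symm
          _ ≤ M1 * (s - gmesh T r N 1)^(2*β-1) := mul_le_mul_of_nonneg_left h1 hM10.le
      calc (gmesh T r N n - s) ^ (-(2*β)) *
            (∫ u in (0:ℝ)..gmesh T r N 1, |(s - u) ^ (-β) - (gmesh T r N 1 - u) ^ (-β)| ^ 2)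
          ≤ (gmesh T r N n - s) ^ (-(2*β)) * (M1 * (s - gmesh T r N 1)^(2*β-1)) :=
            mul_le_mul_of_nonneg_left (hJA.trans hstep1) htnn
        _ = M1 * ((gmesh T r N n - s) ^ (-(2*β)) * (s - gmesh T r N 1)^(2*β-1)) := by ring
        _ ≤ M * ((gmesh T r N n - s) ^ (-(2*β)) * (s - gmesh T r N 1)^(2*β-1)) :=
            mul_le_mul_of_nonneg_right (by rw [hMdef]; linarith) hprodnn
    · -- 2 ≤ i
      have hi2 : 2 ≤ i := hige2
      have ht1ilt : gmesh T r N 1 < gmesh T r N i := gmesh_mono hT hr hN1 hige2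
      have hstep := gmesh_step hT hr (show i + 1 ≤ N by omega)
      have hJB := innerB hβ0 hβ1 ht1pos ht1ilt htis
        (show s - gmesh T r N i ≤ r*T/(N:ℝ) by linarith)
      have hinterp := le_rpow_interp hJnn hJA hJB hl0.le hl1.le
      have hgi1 : 0 < gmesh T r N i - gmesh T r N 1 := by linarith
      have hexp : (-(2*β) - 1) * l = 2*β - 1 := by
        rw [hldef]; field_simp; ring
      have hYl : (gmesh T r N 1 * (2 * β * (r*T/(N:ℝ))) *
            (gmesh T r N i - gmesh T r N 1)^(-(2*β) - 1))^l
          = B0^l * (gmesh T r N i - gmesh T r N 1)^(2*β-1) := by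
        rw [Real.mul_rpow (by positivity) (Real.rpow_nonneg hgi1.le _),
          ← Real.rpow_mul hgi1.le, hexp, hB0def]
      have hKb := gmesh_K hT hr hN1 hi2
      have hKb' : s - gmesh T r N 1 ≤ K * (gmesh T r N i - gmesh T r N 1) := by
        rw [hKdef]; linarith
      have hfrac : (gmesh T r N i - gmesh T r N 1)^(2*β-1)
          ≤ K * (s - gmesh T r N 1)^(2*β-1) := by
        have hKpos : (0:ℝ) < K := by linarith
        have h1 : (s - gmesh T r N 1)/K ≤ gmesh T r N i - gmesh T r N 1 := by
          rw [div_le_iff₀ hKpos]; linarith [hKb']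
        have h2 : (gmesh T r N i - gmesh T r N 1)^(2*β-1)
            ≤ ((s - gmesh T r N 1)/K)^(2*β-1) :=
          Real.rpow_le_rpow_of_nonpos (by positivity) h1 (by linarith)
        have h3 : ((s - gmesh T r N 1)/K)^(2*β-1)
            = (s - gmesh T r N 1)^(2*β-1) * (K^(2*β-1))⁻¹ := by
          rw [Real.div_rpow hst1.le hKpos.le, div_eq_mul_inv]
        have h4 : (K^(2*β-1))⁻¹ = K^(1-2*β) := by
          rw [← Real.rpow_neg hKpos.le, show -(2*β-1) = 1-2*β by ring]
        have h5 : K^(1-2*β) ≤ K := by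
          have h6 := Real.rpow_le_rpow_of_exponent_le hK1 (show 1-2*β ≤ 1 by linarith)
          rwa [Real.rpow_one] at h6
        calc (gmesh T r N i - gmesh T r N 1)^(2*β-1)
            ≤ (s - gmesh T r N 1)^(2*β-1) * K^(1-2*β) := by rw [← h4, ← h3]; exact h2
          _ ≤ (s - gmesh T r N 1)^(2*β-1) * K :=
              mul_le_mul_of_nonneg_left h5 (Real.rpow_nonneg hst1.le _)
          _ = K * (s - gmesh T r N 1)^(2*β-1) := by ring
      have hJM2 : (∫ u in (0:ℝ)..gmesh T r N 1,
            |(s - u) ^ (-β) - (gmesh T r N i - u) ^ (-β)| ^ 2)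
          ≤ M2 * (s - gmesh T r N 1)^(2*β-1) := by
        calc (∫ u in (0:ℝ)..gmesh T r N 1,
              |(s - u) ^ (-β) - (gmesh T r N i - u) ^ (-β)| ^ 2)
            ≤ (gmesh T r N 1 ^ (1 - 2*β) / (1 - 2*β))^(1-l) *
                (B0^l * (gmesh T r N i - gmesh T r N 1)^(2*β-1)) := by
              rw [← hYl]; exact hinterp
          _ ≤ (gmesh T r N 1 ^ (1 - 2*β) / (1 - 2*β))^(1-l) *
                (B0^l * (K * (s - gmesh T r N 1)^(2*β-1))) := by
              apply mul_le_mul_of_nonneg_left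
                (mul_le_mul_of_nonneg_left hfrac (Real.rpow_nonneg hB00.le _))
                (Real.rpow_nonneg (by positivity) _)
          _ = M2 * (s - gmesh T r N 1)^(2*β-1) := by
              rw [hM2def, hAdef]; ring
      calc (gmesh T r N n - s) ^ (-(2*β)) *
            (∫ u in (0:ℝ)..gmesh T r N 1, |(s - u) ^ (-β) - (gmesh T r N i - u) ^ (-β)| ^ 2)
          ≤ (gmesh T r N n - s) ^ (-(2*β)) * (M2 * (s - gmesh T r N 1)^(2*β-1)) :=
            mul_le_mul_of_nonneg_left hJM2 htnn
        _ = M2 * ((gmesh T r N n - s) ^ (-(2*β)) * (s - gmesh T r N 1)^(2*β-1)) := by ring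
        _ ≤ M * ((gmesh T r N n - s) ^ (-(2*β)) * (s - gmesh T r N 1)^(2*β-1)) :=
            mul_le_mul_of_nonneg_right (by rw [hMdef]; linarith) hprodnn
  -- comparison with the beta integral
  have hbint := beta_integrable (a := gmesh T r N 1) (b := gmesh T r N n) ht1n
    (by linarith : 0 < 2*β) hβ1'
  have hΦint := hbint.const_mul M
  have hmain : (∫ s in (gmesh T r N 1)..(gmesh T r N n),
        (gmesh T r N n - s) ^ (-(2 * β)) *
          ∫ u in (0:ℝ)..(gmesh T r N 1), |(s - u) ^ (-β) - (hat s - u) ^ (-β)| ^ 2)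
      ≤ ∫ s in (gmesh T r N 1)..(gmesh T r N n),
          M * ((gmesh T r N n - s) ^ (-(2*β)) * (s - gmesh T r N 1) ^ (2*β-1)) := by
    by_cases hI : IntervalIntegrable (fun s => (gmesh T r N n - s) ^ (-(2 * β)) *
        ∫ u in (0:ℝ)..(gmesh T r N 1), |(s - u) ^ (-β) - (hat s - u) ^ (-β)| ^ 2) volume
        (gmesh T r N 1) (gmesh T r N n)
    · exact intervalIntegral.integral_mono_on ht1n.le hI hΦint hkey
    · rw [intervalIntegral.integral_undef hI]
      apply intervalIntegral.integral_nonneg ht1n.le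
      intro u hu
      exact mul_nonneg hM0.le (mul_nonneg (Real.rpow_nonneg (by linarith [hu.2]) _)
        (Real.rpow_nonneg (by linarith [hu.1]) _))
  have hbval := beta_bound (a := gmesh T r N 1) (b := gmesh T r N n) ht1n
    (by linarith : 0 < 2*β) hβ1'
  -- bounding M
  have hNe : (N:ℝ)^(-(1-2*β)) * (N:ℝ)^(-(1-2*β)) = (N:ℝ)^(-(2*(1-2*β))) := by
    rw [← Real.rpow_add hN0]; congr 1; ring
  have hTNe : (T/(N:ℝ))^(1-2*β) = T^(1-2*β) * (N:ℝ)^(-(1-2*β)) := by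
    rw [Real.div_rpow hT.le hN0.le, Real.rpow_neg hN0.le, div_eq_mul_inv]
  have hA_le : A ≤ CA * (N:ℝ)^(-(1-2*β)) := by
    have h1 : gmesh T r N 1 ^ (1-2*β) ≤ (T/(N:ℝ))^(1-2*β) :=
      Real.rpow_le_rpow ht1pos.le ht1le (by linarith)
    rw [hTNe] at h1
    calc A = gmesh T r N 1 ^ (1-2*β) / (1-2*β) := hAdef
      _ ≤ (T^(1-2*β) * (N:ℝ)^(-(1-2*β))) / (1-2*β) :=
          (div_le_div_iff_of_pos_right (by linarith)).mpr h1
      _ = CA * (N:ℝ)^(-(1-2*β)) := by rw [hCAdef]; ring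
  have hM1le : M1 ≤ C1 * (N:ℝ)^(-(2*(1-2*β))) := by
    have h1 : (gmesh T r N 2 - gmesh T r N 1)^(1-2*β) ≤ ((2:ℝ)^r * T/(N:ℝ))^(1-2*β) :=
      Real.rpow_le_rpow (by linarith) (by linarith) (by linarith)
    have h2 : ((2:ℝ)^r * T/(N:ℝ))^(1-2*β)
        = ((2:ℝ)^r * T)^(1-2*β) * (N:ℝ)^(-(1-2*β)) := by
      rw [Real.div_rpow (by positivity) hN0.le, Real.rpow_neg hN0.le, div_eq_mul_inv]
    rw [h2] at h1
    calc M1 = A * (gmesh T r N 2 - gmesh T r N 1)^(1-2*β) := hM1def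
      _ ≤ (CA * (N:ℝ)^(-(1-2*β))) * (((2:ℝ)^r * T)^(1-2*β) * (N:ℝ)^(-(1-2*β))) :=
          mul_le_mul hA_le h1 (Real.rpow_nonneg (by linarith) _)
            (by positivity)
      _ = C1 * ((N:ℝ)^(-(1-2*β)) * (N:ℝ)^(-(1-2*β))) := by rw [hC1def]; ring
      _ = C1 * (N:ℝ)^(-(2*(1-2*β))) := by rw [hNe]
  have hM2le : M2 ≤ C2 * (N:ℝ)^(-(2*(1-2*β))) := by
    have hNg : (0:ℝ) < (N:ℝ)^(-(1-2*β)) := Real.rpow_pos_of_pos hN0 _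
    have hB0le : B0 ≤ (2*β*r*T^2) * (N:ℝ)^(-(2:ℝ)) := by
      have h1 : B0 ≤ (T/(N:ℝ)) * (2*β*(r*T/(N:ℝ))) := by
        rw [hB0def]
        apply mul_le_mul_of_nonneg_right ht1le
        have hr0 : 0 < r := by linarith
        positivity
      have h2 : (T/(N:ℝ)) * (2*β*(r*T/(N:ℝ))) = (2*β*r*T^2) * ((N:ℝ)^((2:ℕ):ℝ))⁻¹ := by
        rw [Real.rpow_natCast]
        field_simp
      have h3 : ((N:ℝ)^((2:ℕ):ℝ))⁻¹ = (N:ℝ)^(-(2:ℝ)) := by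
        rw [← Real.rpow_neg hN0.le]
        norm_num
      rw [h2, h3] at h1
      exact h1
    have hApow : A^(1-l) ≤ CA^(1-l) * ((N:ℝ)^(-(1-2*β)))^(1-l) := by
      have h := Real.rpow_le_rpow hA0.le hA_le (by linarith : (0:ℝ) ≤ 1-l)
      rwa [Real.mul_rpow hCA.le hNg.le] at h
    have hBpow : B0^l ≤ (2*β*r*T^2)^l * ((N:ℝ)^(-(2:ℝ)))^l := by
      have h := Real.rpow_le_rpow hB00.le hB0le hl0.le
      rwa [Real.mul_rpow (by positivity) (Real.rpow_nonneg hN0.le _)] at h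
    have hcomb : M2 ≤ K * (CA^(1-l) * ((N:ℝ)^(-(1-2*β)))^(1-l)) *
        ((2*β*r*T^2)^l * ((N:ℝ)^(-(2:ℝ)))^l) := by
      rw [hM2def]
      apply mul_le_mul (mul_le_mul_of_nonneg_left hApow (by linarith)) hBpow
        (Real.rpow_nonneg hB00.le _) (by positivity)
    have hNexp : ((N:ℝ)^(-(1-2*β)))^(1-l) * ((N:ℝ)^(-(2:ℝ)))^l = (N:ℝ)^(-(2*(1-2*β))) := by
      rw [← Real.rpow_mul hN0.le, ← Real.rpow_mul hN0.le, ← Real.rpow_add hN0]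
      congr 1
      rw [hldef]; field_simp; ring
    calc M2 ≤ K * (CA^(1-l) * ((N:ℝ)^(-(1-2*β)))^(1-l)) *
          ((2*β*r*T^2)^l * ((N:ℝ)^(-(2:ℝ)))^l) := hcomb
      _ = C2 * (((N:ℝ)^(-(1-2*β)))^(1-l) * ((N:ℝ)^(-(2:ℝ)))^l) := by rw [hC2def]; ring
      _ = C2 * (N:ℝ)^(-(2*(1-2*β))) := by rw [hNexp]
  have hMle : M ≤ (C1 + C2) * (N:ℝ)^(-(2*(1-2*β))) := by
    rw [hMdef]
    calc M1 + M2 ≤ C1 * (N:ℝ)^(-(2*(1-2*β))) + C2 * (N:ℝ)^(-(2*(1-2*β))) := by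
          linarith
      _ = (C1 + C2) * (N:ℝ)^(-(2*(1-2*β))) := by ring
  -- final assembly
  calc (∫ s in (gmesh T r N 1)..(gmesh T r N n),
        (gmesh T r N n - s) ^ (-(2 * β)) *
          ∫ u in (0:ℝ)..(gmesh T r N 1), |(s - u) ^ (-β) - (hat s - u) ^ (-β)| ^ 2)
      ≤ ∫ s in (gmesh T r N 1)..(gmesh T r N n),
          M * ((gmesh T r N n - s) ^ (-(2*β)) * (s - gmesh T r N 1) ^ (2*β-1)) := hmain
    _ = M * ∫ s in (gmesh T r N 1)..(gmesh T r N n),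
          (gmesh T r N n - s) ^ (-(2*β)) * (s - gmesh T r N 1) ^ (2*β-1) :=
        intervalIntegral.integral_const_mul M _
    _ ≤ M * (1/(2*β) + 1/(1-(2*β))) := mul_le_mul_of_nonneg_left hbval hM0.le
    _ = (1/(2*β) + 1/(1-2*β)) * M := by ring
    _ ≤ (1/(2*β) + 1/(1-2*β)) * ((C1 + C2) * (N:ℝ)^(-(2*(1-2*β)))) := by
        apply mul_le_mul_of_nonneg_left hMle
        have h2 : (0:ℝ) < 1/(1-2*β) := one_div_pos.mpr (by linarith)
        have h1 : (0:ℝ) < 1/(2*β) := by positivity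
        linarith
    _ = ((1/(2*β) + 1/(1-2*β)) * (C1 + C2)) * (N:ℝ)^(-(2*(1-2*β))) := by ring
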